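/- Suppose resisters control total power p_r and, under approval voting with max votes v, each resister account may cast its full power to up to v distinct candidates. The maximum achievable value of the (n-t+1)-th largest score among resister candidates is (min(v, n-t+1)/(n-t+1))·p_r, achieved by splitting the power into accounts that together give each of n-t+1 candidates an equal score. -/

import Mathlib

noncomputable def kthLargest {m : ℕ} (w : Fin m → ℝ) (k : ℕ) : ℝ :=
  ((Finset.univ.val.map w).sort (· ≤ ·)).getD (m - k) 0

lemma card_filter_lt (Mr k : ℕ) (hkM : k ≤ Mr) :
    (Finset.univ.filter fun c : Fin Mr => (c : ℕ) < k).card = k := by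
  have h : (Finset.univ.filter fun c : Fin Mr => (c : ℕ) < k).map Fin.valEmbedding
      = Finset.Iio k := by
    ext x
    simp only [Finset.mem_map, Finset.mem_filter, Finset.mem_univ, true_and,
      Fin.valEmbedding_apply, Finset.mem_Iio]
    constructor
    · rintro ⟨c, hc, rfl⟩; exact hc
    · intro hx; exact ⟨⟨x, lt_of_lt_of_le hx hkM⟩, hx, rfl⟩
  rw [← Finset.card_map Fin.valEmbedding, h, Nat.card_Iio]

lemma kth_step (Mr k : ℕ) (hk : 1 ≤ k) (hkM : k ≤ Mr) (s : ℝ) (hs : 0 ≤ s) :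
    kthLargest (fun c : Fin Mr => if (c : ℕ) < k then s else 0) k = s := by
  set w : Fin Mr → ℝ := fun c => if (c : ℕ) < k then s else 0 with hw
  have hcard1 : Multiset.card
      (Multiset.filter (fun c : Fin Mr => (c : ℕ) < k) Finset.univ.val) = k := by
    rw [← Finset.filter_val]; exact card_filter_lt Mr k hkM
  have hms : Finset.univ.val.map w
      = Multiset.replicate k s + Multiset.replicate (Mr - k) 0 := by
    have hsplit := Multiset.filter_add_not (fun c : Fin Mr => (c : ℕ) < k)
      (Finset.univ.val)
    have hcardtot : Multiset.card (Finset.univ.val : Multiset (Fin Mr)) = Mr := by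
      simp
    rw [← hsplit, Multiset.map_add]
    have hcard2 : Multiset.card
        (Multiset.filter (fun c : Fin Mr => ¬ (c : ℕ) < k) Finset.univ.val) = Mr - k := by
      have := congrArg Multiset.card hsplit
      rw [Multiset.card_add, hcard1, hcardtot] at this
      omega
    congr 1
    · rw [Multiset.eq_replicate]
      refine ⟨by rw [Multiset.card_map, hcard1], ?_⟩
      intro b hb
      obtain ⟨c, hc, rfl⟩ := Multiset.mem_map.mp hb
      simp only [hw]
      rw [if_pos (Multiset.mem_filter.mp hc).2]
    · rw [Multiset.eq_replicate]
      refine ⟨by rw [Multiset.card_map, hcard2], ?_⟩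
      intro b hb
      obtain ⟨c, hc, rfl⟩ := Multiset.mem_map.mp hb
      simp only [hw]
      rw [if_neg (Multiset.mem_filter.mp hc).2]
  have hsrep : List.Pairwise (· ≤ ·) (List.replicate (Mr - k) (0 : ℝ)) :=
    List.pairwise_replicate.mpr (Or.inr le_rfl)
  have hsrep2 : List.Pairwise (· ≤ ·) (List.replicate k s) :=
    List.pairwise_replicate.mpr (Or.inr le_rfl)
  have hperm : (Multiset.sort (Finset.univ.val.map w) (· ≤ ·)).Perm
      (List.replicate (Mr - k) 0 ++ List.replicate k s) := by
    apply Multiset.coe_eq_coe.mp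
    rw [Multiset.sort_eq, hms, ← Multiset.coe_add, Multiset.coe_replicate,
      Multiset.coe_replicate, add_comm]
  have hsort : (Finset.univ.val.map w).sort (· ≤ ·)
      = List.replicate (Mr - k) 0 ++ List.replicate k s := by
    refine List.Perm.eq_of_pairwise' (Multiset.pairwise_sort _ _) ?_ hperm
    refine List.pairwise_append.mpr ⟨hsrep, hsrep2, ?_⟩
    intro a ha b hb
    rw [List.eq_of_mem_replicate ha, List.eq_of_mem_replicate hb]
    exact hs
  rw [kthLargest, hsort, List.getD_append_right _ _ _ _ (by simp)]
  simp only [List.length_replicate, Nat.sub_self]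
  obtain ⟨k', rfl⟩ : ∃ k', k = k' + 1 := ⟨k - 1, by omega⟩
  rfl

theorem stmt12 (n t v : ℕ) (ht : 1 ≤ t) (htn : t ≤ n) (hv : 1 ≤ v)
    (pr : ℝ) (hpr : 0 ≤ pr) (Mr : ℕ) (hMr : n - t + 1 ≤ Mr) :
    IsGreatest {x : ℝ | ∃ (A : ℕ) (q : Fin A → ℝ) (votes : Fin A → Finset (Fin Mr)),
        (∀ i, 0 ≤ q i) ∧ (∑ i, q i) = pr ∧ (∀ i, (votes i).card ≤ v) ∧
        x = kthLargest
          (fun c => ∑ i ∈ Finset.univ.filter (fun i => c ∈ votes i), q i)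
          (n - t + 1)}
      (((min v (n - t + 1) : ℕ) : ℝ) / ((n - t + 1 : ℕ) : ℝ) * pr) := by
  set k := n - t + 1 with hkdef
  have hk1 : 1 ≤ k := by omega
  have hkM : k ≤ Mr := hMr
  haveI : NeZero k := ⟨by omega⟩
  have hkR : (0 : ℝ) < (k : ℝ) := by exact_mod_cast hk1
  set m := min v k with hmdef
  have hm1 : 1 ≤ m := le_min hv hk1
  have hmk : m ≤ k := min_le_right _ _
  have hmv : m ≤ v := min_le_left _ _
  constructor
  · -- achievability
    refine ⟨k, (fun _ => pr / k),
      (fun i => (Finset.univ.image (fun j : Fin m => i + Fin.castLE hmk j)).map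
        (Fin.castLEEmb hkM)), ?_, ?_, ?_, ?_⟩
    · intro i; positivity
    · rw [Finset.sum_const, Finset.card_univ, Fintype.card_fin, nsmul_eq_mul]
      field_simp
    · intro i
      rw [Finset.card_map]
      exact le_trans (le_trans Finset.card_image_le (by simp)) hmv
    · have hfun : (fun c : Fin Mr => ∑ i ∈ Finset.univ.filter
          (fun i : Fin k => c ∈ (Finset.univ.image
            (fun j : Fin m => i + Fin.castLE hmk j)).map (Fin.castLEEmb hkM)),
          (pr / k)) = fun c : Fin Mr => if (c : ℕ) < k then (m : ℝ) * (pr / k) else 0 := by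
        funext c
        by_cases hc : (c : ℕ) < k
        · have hinj : Function.Injective
              (fun j : Fin m => (⟨(c : ℕ), hc⟩ : Fin k) - Fin.castLE hmk j) := by
            intro a b hab
            have := sub_right_injective hab
            exact Fin.castLE_injective hmk this
          have hfil : Finset.univ.filter (fun i : Fin k => c ∈ (Finset.univ.image
              (fun j : Fin m => i + Fin.castLE hmk j)).map (Fin.castLEEmb hkM))
              = Finset.univ.image
                (fun j : Fin m => (⟨(c : ℕ), hc⟩ : Fin k) - Fin.castLE hmk j) := by
            ext i
            simp only [Finset.mem_filter, Finset.mem_univ, true_and, Finset.mem_map,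
              Finset.mem_image, Fin.castLEEmb_apply]
            constructor
            · rintro ⟨b, ⟨j, rfl⟩, hb⟩
              have hbe : i + Fin.castLE hmk j = (⟨(c : ℕ), hc⟩ : Fin k) := by
                apply Fin.ext
                have := congrArg Fin.val hb
                simpa using this
              exact ⟨j, (eq_sub_of_add_eq hbe).symm⟩
            · rintro ⟨j, rfl⟩
              refine ⟨((⟨(c : ℕ), hc⟩ : Fin k) - Fin.castLE hmk j) + Fin.castLE hmk j,
                ⟨j, rfl⟩, ?_⟩
              rw [sub_add_cancel]
              apply Fin.ext
              rfl
          rw [if_pos hc, hfil, Finset.sum_const,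
            Finset.card_image_of_injective _ hinj, Finset.card_univ,
            Fintype.card_fin, nsmul_eq_mul]
        · rw [if_neg hc]
          have hempty : Finset.univ.filter (fun i : Fin k => c ∈ (Finset.univ.image
              (fun j : Fin m => i + Fin.castLE hmk j)).map (Fin.castLEEmb hkM)) = ∅ := by
            rw [Finset.filter_eq_empty_iff]
            intro i _ hmem
            apply hc
            obtain ⟨b, -, rfl⟩ := Finset.mem_map.mp hmem
            simpa using b.isLt
          rw [hempty, Finset.sum_empty]
      rw [hfun, kth_step Mr k hk1 hkM _ (by positivity)]
      rw [show m = min v k from hmdef]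
      ring
  · -- upper bound
    rintro x ⟨A, q, votes, hq0, hqsum, hvcard, rfl⟩
    set w : Fin Mr → ℝ :=
      (fun c => ∑ i ∈ Finset.univ.filter (fun i => c ∈ votes i), q i) with hwdef
    set l := Multiset.sort (Finset.univ.val.map w) (· ≤ ·) with hldef
    have hlen : l.length = Mr := by
      rw [hldef, Multiset.length_sort, Multiset.card_map]; simp
    have hmeml : ∀ a ∈ l, ∃ c, w c = a := by
      intro a ha
      rw [hldef, Multiset.mem_sort] at ha
      obtain ⟨c, -, rfl⟩ := Multiset.mem_map.mp ha
      exact ⟨c, rfl⟩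
    have hw0 : ∀ c, 0 ≤ w c := fun c => Finset.sum_nonneg fun i _ => hq0 i
    have hwpr : ∀ c, w c ≤ pr := by
      intro c
      rw [← hqsum]
      exact Finset.sum_le_sum_of_subset_of_nonneg (Finset.filter_subset _ _)
        (fun i _ _ => hq0 i)
    have hidx : Mr - k < l.length := by rw [hlen]; omega
    have hxval : kthLargest w k = l[Mr - k] := by
      rw [kthLargest]
      exact List.getD_eq_getElem l 0 hidx
    obtain ⟨c0, hc0⟩ := hmeml _ (l.getElem_mem hidx)
    have hx0 : 0 ≤ l[Mr - k] := hc0 ▸ hw0 c0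
    have hxpr : l[Mr - k] ≤ pr := hc0 ▸ hwpr c0
    -- total score bound
    have hsumw : ∑ c, w c ≤ (v : ℝ) * pr := by
      have h1 : ∑ c, w c = ∑ i, ∑ c, (if c ∈ votes i then q i else 0) := by
        rw [Finset.sum_comm]
        apply Finset.sum_congr rfl
        intro c _
        rw [hwdef]
        exact Finset.sum_filter _ _
      rw [h1]
      have h2 : ∀ i : Fin A, ∑ c, (if c ∈ votes i then q i else 0)
          = ((votes i).card : ℝ) * q i := by
        intro i
        rw [Finset.sum_ite_mem, Finset.univ_inter, Finset.sum_const, nsmul_eq_mul]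
      calc ∑ i, ∑ c, (if c ∈ votes i then q i else 0)
          = ∑ i, ((votes i).card : ℝ) * q i := by
            exact Finset.sum_congr rfl fun i _ => h2 i
        _ ≤ ∑ i, (v : ℝ) * q i := by
            apply Finset.sum_le_sum
            intro i _
            exact mul_le_mul_of_nonneg_right (by exact_mod_cast hvcard i) (hq0 i)
        _ = (v : ℝ) * pr := by rw [← Finset.mul_sum, hqsum]
    have hsuml : l.sum = ∑ c, w c := by
      have h1 : ((l : Multiset ℝ)).sum = l.sum := Multiset.sum_coe l
      rw [hldef, Multiset.sort_eq] at h1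
      rw [← h1, Finset.sum]
    -- k * x ≤ sum
    have hkx : (k : ℝ) * l[Mr - k] ≤ l.sum := by
      have hsplit : l.sum = (l.take (Mr - k)).sum + (l.drop (Mr - k)).sum := by
        rw [← List.sum_append, List.take_append_drop]
      have htake : 0 ≤ (l.take (Mr - k)).sum := by
        apply List.sum_nonneg
        intro a ha
        obtain ⟨c, rfl⟩ := hmeml a (List.mem_of_mem_take ha)
        exact hw0 c
      have hdropeq : l.drop (Mr - k) = l[Mr - k] :: l.drop (Mr - k + 1) :=
        List.drop_eq_getElem_cons hidx
      have hsorted : l.Pairwise (· ≤ ·) := Multiset.pairwise_sort _ _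
      have hdsorted : (l.drop (Mr - k)).Pairwise (· ≤ ·) :=
        hsorted.sublist (List.drop_sublist _ _)
      rw [hdropeq] at hdsorted
      have hge : ∀ b ∈ l.drop (Mr - k + 1), l[Mr - k] ≤ b :=
        fun b hb => List.rel_of_pairwise_cons hdsorted hb
      have hlen2 : (l.drop (Mr - k + 1)).length = k - 1 := by
        rw [List.length_drop, hlen]; omega
      have hdged : ((k : ℕ) - 1) • l[Mr - k] ≤ (l.drop (Mr - k + 1)).sum := by
        rw [← hlen2]
        exact List.card_nsmul_le_sum _ _ hge
      rw [hsplit, hdropeq, List.sum_cons]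
      rw [nsmul_eq_mul] at hdged
      have hcast : (((k : ℕ) - 1 : ℕ) : ℝ) = (k : ℝ) - 1 := by
        rw [Nat.cast_sub hk1, Nat.cast_one]
      rw [hcast] at hdged
      linarith
    have hkxv : (k : ℝ) * l[Mr - k] ≤ (v : ℝ) * pr := by
      rw [hsuml] at hkx; linarith
    rw [hxval]
    rcases le_total v k with h | h
    · have hmv2 : m = v := min_eq_left h
      rw [hmv2, div_mul_eq_mul_div, le_div_iff₀ hkR]
      nlinarith
    · have hmv2 : m = k := min_eq_right h
      rw [hmv2, div_self (ne_of_gt hkR), one_mul]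
      exact hxpr
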